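/- There exists a universal constant c > 0 such that for every n ≥ 1 and every subset S ⊆ {0,1}ⁿ, the outer vertex boundary N(S) = {y ∉ S : ∃ x ∈ S with Hamming distance dist(x,y) = 1} satisfies |N(S)| ≥ (c/√n)·|S|·(1 − |S|/2ⁿ). -/

import Mathlib

open Finset
set_option maxHeartbeats 1000000

lemma key_real' (nr N s0 s1 β a b : ℝ) (hnr : 0 ≤ nr) (hN : 0 < N)
    (ha : a^2 = nr) (hb : b^2 = nr+1) (ha0 : 0 ≤ a) (hb0 : 0 ≤ b)
    (hs0 : 0 ≤ s0) (h0N : s0 ≤ N) (hs1 : 0 ≤ s1) (h1N : s1 ≤ N) (hβ : 0 ≤ β)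
    (H1 : s0*(N-s0) + s1*(N-s1) ≤ a * N * β)
    (H2 : |s0 - s1| ≤ β) :
    (s0+s1)*(2*N-(s0+s1)) ≤ b * (2*N) * β := by
  obtain ⟨m, hm⟩ : ∃ m, m = (s0+s1)*(2*N-(s0+s1)) := ⟨_, rfl⟩
  obtain ⟨d, hd⟩ : ∃ d, d = s0 - s1 := ⟨_, rfl⟩
  rw [← hm]
  rw [← hd] at H2
  have hmN : m ≤ N^2 := by nlinarith [sq_nonneg (N - s0 - s1)]
  have hm0 : 0 ≤ m := by nlinarith
  have hid : s0*(N-s0) + s1*(N-s1) = (m - d^2)/2 := by rw [hm, hd]; ring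
  have hd2 : d^2 ≤ β^2 := by nlinarith [sq_abs d, abs_nonneg d]
  have hbpos : 0 < b := by nlinarith
  rcases le_or_gt m (2*(nr+1)*d^2) with hc | hc
  · -- boundary from the difference of the two slices
    have hX : 0 ≤ b * (2*N) * β := by positivity
    have hRHS : (b*(2*N)*β)^2 = (nr+1)*(4*N^2*β^2) := by
      rw [mul_pow, mul_pow, hb]; ring
    have h1 : m*m ≤ N^2*m := mul_le_mul_of_nonneg_right hmN hm0
    have h2 : N^2*m ≤ N^2*(2*(nr+1)*d^2) := mul_le_mul_of_nonneg_left hc (sq_nonneg N)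
    have h3 : (2*(nr+1)*N^2)*d^2 ≤ (2*(nr+1)*N^2)*β^2 :=
      mul_le_mul_of_nonneg_left hd2 (by positivity)
    have hsq : m^2 ≤ (b*(2*N)*β)^2 := by rw [hRHS]; nlinarith
    nlinarith [hsq, hm0, hX]
  · -- use the induction hypothesis
    rcases eq_or_lt_of_le hnr with h0 | hn1
    · exfalso
      have ha2 : a^2 = 0 := by rw [ha, ← h0]
      have ha' : a = 0 := by
        have := sq_eq_zero_iff.mp ha2
        exact this
      rw [ha', zero_mul, zero_mul, hid] at H1
      rw [← h0] at hc
      linarith [sq_nonneg d]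
    · have hapos : (0:ℝ) < a := by nlinarith
      have hab : 2*a*b ≤ 2*nr+1 := by nlinarith [sq_nonneg (a-b)]
      have hnn : (0:ℝ) ≤ nr+1 := by positivity
      have H3 : m*(2*nr+1) ≤ 4*(nr+1)*(a*N*β) := by
        nlinarith [mul_le_mul_of_nonneg_left
          (show m - d^2 ≤ 2*(a*N*β) by linarith) hnn]
      have e1 : m*(2*a*b) ≤ m*(2*nr+1) := mul_le_mul_of_nonneg_left hab hm0
      have e2 : m*(2*nr+1) ≤ 4*b^2*(a*N*β) := by
        have : 4*(nr+1)*(a*N*β) = 4*b^2*(a*N*β) := by rw [hb]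
        linarith
      have e3 : a*m ≤ a*(b*(2*N)*β) := by
        rw [← mul_le_mul_iff_right₀ (by positivity : (0:ℝ) < 2*b)]
        nlinarith [e1, e2]
      exact (mul_le_mul_iff_right₀ hapos).mp e3

lemma key_real (n : ℕ) (N s0 s1 β : ℝ) (hN : 0 < N)
    (hs0 : 0 ≤ s0) (h0N : s0 ≤ N) (hs1 : 0 ≤ s1) (h1N : s1 ≤ N) (hβ : 0 ≤ β)
    (H1 : s0*(N-s0) + s1*(N-s1) ≤ Real.sqrt n * N * β)
    (H2 : |s0 - s1| ≤ β) :
    (s0+s1)*(2*N-(s0+s1)) ≤ Real.sqrt ((n:ℝ)+1) * (2*N) * β :=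
  key_real' n N s0 s1 β _ _ (Nat.cast_nonneg n) hN
    (Real.sq_sqrt (Nat.cast_nonneg n)) (Real.sq_sqrt (by positivity))
    (Real.sqrt_nonneg _) (Real.sqrt_nonneg _) hs0 h0N hs1 h1N hβ H1 H2

def cubeBnd {n : ℕ} (S : Finset (Fin n → Bool)) : Finset (Fin n → Bool) :=
  Finset.univ.filter (fun y : Fin n → Bool => y ∉ S ∧ ∃ x ∈ S, hammingDist x y = 1)

def cubeSlice {n : ℕ} (b : Bool) (S : Finset (Fin (n+1) → Bool)) : Finset (Fin n → Bool) :=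
  univ.filter (fun x => (Fin.cons b x : Fin (n+1) → Bool) ∈ S)

lemma mem_cubeSlice {n : ℕ} {b : Bool} {S : Finset (Fin (n+1) → Bool)} {x : Fin n → Bool} :
    x ∈ cubeSlice b S ↔ (Fin.cons b x : Fin (n+1) → Bool) ∈ S := by
  simp [cubeSlice]

lemma hammingDist_cons (n : ℕ) (a b : Bool) (x y : Fin n → Bool) :
    hammingDist (Fin.cons a x : Fin (n+1) → Bool) (Fin.cons b y) =
      (if a = b then 0 else 1) + hammingDist x y := by
  unfold hammingDist
  rw [Finset.card_filter, Fin.sum_univ_succ, Finset.card_filter]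
  simp

lemma card_cubeSlice (n : ℕ) (S : Finset (Fin (n+1) → Bool)) :
    (cubeSlice false S).card + (cubeSlice true S).card = S.card := by
  have h : ∀ b : Bool, (cubeSlice b S).card = (S.filter (fun y => y 0 = b)).card := by
    intro b
    apply Finset.card_bij' (fun x _ => (Fin.cons b x : Fin (n+1) → Bool))
      (fun y _ => Fin.tail y)
    · intro x hx
      rw [mem_cubeSlice] at hx
      simp [hx]
    · intro y hy
      simp only [mem_filter] at hy
      rw [mem_cubeSlice, ← hy.2, Fin.cons_self_tail]
      exact hy.1
    · intro x _; exact Fin.tail_cons _ _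
    · intro y hy
      simp only [mem_filter] at hy
      rw [← hy.2, Fin.cons_self_tail]
  rw [h, h]
  have h2 : (S.filter (fun y => y 0 = true)) = S.filter (fun y => ¬ y 0 = false) := by
    apply Finset.filter_congr; intro y _; simp
  rw [h2, Finset.card_filter_add_card_filter_not]

lemma bnd_slice_subset1 {n : ℕ} (b : Bool) (S : Finset (Fin (n+1) → Bool)) :
    cubeBnd (cubeSlice b S) ⊆ cubeSlice b (cubeBnd S) := by
  intro x hx
  simp only [cubeBnd, mem_filter, mem_univ, true_and, mem_cubeSlice] at hx ⊢
  obtain ⟨hxn, x', hx', hd⟩ := hx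
  refine ⟨hxn, Fin.cons b x', hx', ?_⟩
  rw [hammingDist_cons]
  simp [hd]

lemma bnd_slice_subset2 {n : ℕ} (b : Bool) (S : Finset (Fin (n+1) → Bool)) :
    cubeSlice (!b) S \ cubeSlice b S ⊆ cubeSlice b (cubeBnd S) := by
  intro x hx
  rw [mem_sdiff, mem_cubeSlice, mem_cubeSlice] at hx
  rw [mem_cubeSlice]
  simp only [cubeBnd, mem_filter, mem_univ, true_and]
  refine ⟨hx.2, Fin.cons (!b) x, hx.1, ?_⟩
  rw [hammingDist_cons]
  simp [hammingDist_self]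

lemma cube_card (n : ℕ) : Fintype.card (Fin n → Bool) = 2^n := by
  simp

lemma cube_isoperimetry : ∀ n : ℕ, ∀ S : Finset (Fin n → Bool),
    (S.card : ℝ) * (2^n - S.card) ≤ Real.sqrt n * 2^n * ((cubeBnd S).card : ℝ) := by
  intro n
  induction n with
  | zero =>
    intro S
    have h1 : S.card ≤ 1 := by
      have := Finset.card_le_univ S
      simpa [cube_card] using this
    interval_cases h : S.card <;> norm_num
  | succ n IH =>
    intro S
    have h2n : (0:ℝ) < 2^n := by positivity
    set S0 := cubeSlice false S
    set S1 := cubeSlice true S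
    set B0 := cubeSlice false (cubeBnd S)
    set B1 := cubeSlice true (cubeBnd S)
    have hcards : ∀ b : Bool, ((cubeSlice b S).card : ℝ) ≤ 2^n := by
      intro b
      have := Finset.card_le_univ (cubeSlice b S)
      rw [cube_card] at this
      exact_mod_cast this
    -- induction hypothesis for each slice, enlarged to the boundary slices
    have hIH : ∀ b : Bool, ((cubeSlice b S).card : ℝ) * (2^n - (cubeSlice b S).card)
        ≤ Real.sqrt n * 2^n * ((cubeSlice b (cubeBnd S)).card : ℝ) := by
      intro b
      refine (IH (cubeSlice b S)).trans ?_
      have hsub := Finset.card_le_card (bnd_slice_subset1 b S)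
      have : ((cubeBnd (cubeSlice b S)).card : ℝ) ≤ ((cubeSlice b (cubeBnd S)).card : ℝ) :=
        by exact_mod_cast hsub
      have hpos : (0:ℝ) ≤ Real.sqrt n * 2^n := by positivity
      exact mul_le_mul_of_nonneg_left this hpos
    -- difference bound
    have hdiff : ∀ b : Bool, ((cubeSlice (!b) S).card : ℝ) - (cubeSlice b S).card
        ≤ ((cubeSlice b (cubeBnd S)).card : ℝ) := by
      intro b
      have h1 := Finset.card_le_card (bnd_slice_subset2 b S)
      have h2 := Finset.le_card_sdiff (cubeSlice b S) (cubeSlice (!b) S)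
      have : (cubeSlice (!b) S).card - (cubeSlice b S).card
          ≤ (cubeSlice b (cubeBnd S)).card := le_trans h2 h1
      have h3 : ((cubeSlice (!b) S).card - (cubeSlice b S).card : ℤ)
          ≤ ((cubeSlice b (cubeBnd S)).card : ℤ) := by
        rcases le_total ((cubeSlice (!b) S).card) ((cubeSlice b S).card) with h | h
        · have : ((cubeSlice (!b) S).card :ℤ) ≤ (cubeSlice b S).card := by exact_mod_cast h
          have : ((cubeSlice (!b) S).card - (cubeSlice b S).card : ℤ) ≤ 0 := by omega
          exact this.trans (by positivity)
        · omega
      exact_mod_cast h3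
    have hBcard : (B0.card : ℝ) + B1.card = ((cubeBnd S).card : ℝ) := by
      exact_mod_cast card_cubeSlice n (cubeBnd S)
    have hb0 : (0:ℝ) ≤ (B0.card : ℝ) := Nat.cast_nonneg _
    have hb1 : (0:ℝ) ≤ (B1.card : ℝ) := Nat.cast_nonneg _
    have H1 : (S0.card:ℝ)*(2^n - S0.card) + (S1.card:ℝ)*(2^n - S1.card)
        ≤ Real.sqrt n * 2^n * ((cubeBnd S).card : ℝ) := by
      have i0 := hIH false
      have i1 := hIH true
      have hpos : (0:ℝ) ≤ Real.sqrt n * 2^n := by positivity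
      nlinarith [i0, i1]
    have H2 : |(S0.card:ℝ) - S1.card| ≤ ((cubeBnd S).card : ℝ) := by
      have d0 := hdiff false
      have d1 := hdiff true
      simp only [Bool.not_false, Bool.not_true] at d0 d1
      rw [abs_sub_le_iff]
      constructor
      · linarith
      · linarith
    have key := key_real' (n:ℝ) (2^n) (S0.card) (S1.card) ((cubeBnd S).card)
      (Real.sqrt n) (Real.sqrt ((n:ℝ)+1)) (Nat.cast_nonneg n) h2n
      (Real.sq_sqrt (Nat.cast_nonneg n)) (Real.sq_sqrt (by positivity))
      (Real.sqrt_nonneg _) (Real.sqrt_nonneg _)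
      (Nat.cast_nonneg _) (hcards false) (Nat.cast_nonneg _) (hcards true)
      (Nat.cast_nonneg _) H1 H2
    have hsum : (S0.card : ℝ) + S1.card = S.card := by
      exact_mod_cast card_cubeSlice n S
    rw [hsum] at key
    calc (S.card : ℝ) * (2^(n+1) - S.card) = (S.card : ℝ) * (2*2^n - S.card) := by ring_nf
      _ ≤ Real.sqrt ((n:ℝ)+1) * (2*2^n) * ((cubeBnd S).card) := key
      _ = Real.sqrt (((n:ℕ)+1:ℕ) : ℝ) * 2^(n+1) * ((cubeBnd S).card) := by
          push_cast; ring_nf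

theorem hypercube_vertex_isoperimetry :
    ∃ c : ℝ, 0 < c ∧
      ∀ n : ℕ, 1 ≤ n → ∀ S : Finset (Fin n → Bool),
        (c / Real.sqrt n) * (S.card : ℝ) * (1 - (S.card : ℝ) / 2^n) ≤
          ((Finset.univ.filter (fun y : Fin n → Bool =>
            y ∉ S ∧ ∃ x ∈ S, hammingDist x y = 1)).card : ℝ) := by
  refine ⟨1, one_pos, ?_⟩
  intro n hn S
  have h := cube_isoperimetry n S
  have hs : (0:ℝ) < Real.sqrt n := Real.sqrt_pos.mpr (by exact_mod_cast hn)
  have h2 : (0:ℝ) < (2:ℝ)^n := by positivity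
  have hB : (Finset.univ.filter (fun y : Fin n → Bool =>
      y ∉ S ∧ ∃ x ∈ S, hammingDist x y = 1)) = cubeBnd S := rfl
  rw [hB]
  have key : (1 / Real.sqrt n) * (S.card:ℝ) * (1 - (S.card:ℝ)/2^n)
      = ((S.card:ℝ) * (2^n - S.card)) / (Real.sqrt n * 2^n) := by
    field_simp
  rw [key, div_le_iff₀ (by positivity)]
  nlinarith [h]
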